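/- Let Γ ≤ Aff(n) be a subgroup whose translation lattice Λ = Λ_Γ is a full lattice in ℝⁿ and whose holonomy F = F_Γ is finite. Then τ(N_{Aff(n)}(Γ)) is a finite-index subgroup of N_{Aut(Λ)}(F) := {A ∈ GL(n,ℝ) | A(Λ) = Λ and A F A⁻¹ = F}. -/

import Mathlib

open scoped Pointwise
set_option synthInstance.maxHeartbeats 1000000
set_option maxHeartbeats 1000000

/-- `Aff n` is the group of invertible affine transformations of `ℝⁿ`. -/
abbrev Aff (n : ℕ) := (Fin n → ℝ) ≃ᵃ[ℝ] (Fin n → ℝ)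

/-- `τ : Aff(n) → GL(n,ℝ)`, sending an affine transformation to its linear part. -/
noncomputable def tau (n : ℕ) : Aff n →* ((Fin n → ℝ) ≃ₗ[ℝ] (Fin n → ℝ)) :=
  AffineEquiv.linearHom

/-- The translation lattice `Λ_Γ` of a subgroup `Γ ≤ Aff(n)`. -/
def transLattice (n : ℕ) (Γ : Subgroup (Aff n)) : Set (Fin n → ℝ) :=
  {v | AffineEquiv.constVAdd ℝ (Fin n → ℝ) v ∈ Γ}

/-- `N_{Aut(Λ)}(F) = {A ∈ GL(n,ℝ) | A(Λ) = Λ and A F A⁻¹ = F}`: the intersection of the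
setwise stabilizer of `Λ` with the normalizer of `F` in `GL(n,ℝ)`. -/
noncomputable def NAut (n : ℕ) (Λ : Set (Fin n → ℝ))
    (F : Subgroup ((Fin n → ℝ) ≃ₗ[ℝ] (Fin n → ℝ))) :
    Subgroup ((Fin n → ℝ) ≃ₗ[ℝ] (Fin n → ℝ)) :=
  MulAction.stabilizer ((Fin n → ℝ) ≃ₗ[ℝ] (Fin n → ℝ)) Λ ⊓ Subgroup.normalizer (F : Set ((Fin n → ℝ) ≃ₗ[ℝ] (Fin n → ℝ)))

namespace Stmt10Aux

variable {n : ℕ} (Γ : Subgroup (Aff n))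

local notation "V" => Fin n → ℝ
local notation "GL" => (Fin n → ℝ) ≃ₗ[ℝ] (Fin n → ℝ)

/-- Affine maps on a vector space: value formula. -/
lemma apply_eq (g : Aff n) (x : V) : g x = g.linear x + g 0 := by
  have := g.map_vadd 0 x
  simpa [vadd_eq_add] using this

lemma constVAdd_apply (v x : V) : AffineEquiv.constVAdd ℝ V v x = v + x := rfl

/-- The translation lattice as an additive subgroup. -/
def latt : AddSubgroup V where
  carrier := transLattice n Γ
  zero_mem' := by
    show AffineEquiv.constVAdd ℝ V (0 : V) ∈ Γ
    rw [AffineEquiv.constVAdd_zero]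
    exact Γ.one_mem
  add_mem' := by
    intro a b ha hb
    show AffineEquiv.constVAdd ℝ V (a + b) ∈ Γ
    rw [AffineEquiv.constVAdd_add]
    exact Γ.mul_mem (ha : AffineEquiv.constVAdd ℝ V a ∈ Γ) (hb : AffineEquiv.constVAdd ℝ V b ∈ Γ)
  neg_mem' := by
    intro a ha
    show AffineEquiv.constVAdd ℝ V (-a) ∈ Γ
    have : AffineEquiv.constVAdd ℝ V (-a) = (AffineEquiv.constVAdd ℝ V a)⁻¹ := by
      apply AffineEquiv.ext; intro x
      show -a + x = (AffineEquiv.constVAdd ℝ V a).symm x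
      rw [AffineEquiv.constVAdd_symm]
      rfl
    rw [this]
    exact Γ.inv_mem ha

lemma mem_latt_iff (v : V) : v ∈ latt Γ ↔ AffineEquiv.constVAdd ℝ V v ∈ Γ := Iff.rfl

/-- conjugation of a translation. -/
lemma conj_constVAdd (g : Aff n) (v : V) :
    g * AffineEquiv.constVAdd ℝ V v * g⁻¹ = AffineEquiv.constVAdd ℝ V (g.linear v) := by
  apply AffineEquiv.ext; intro x
  show g (v + (g⁻¹ x)) = g.linear v + x
  rw [add_comm, apply_eq g (g⁻¹ x + v), map_add]
  have : g (g⁻¹ x) = x := by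
    show (g * g⁻¹) x = x
    rw [mul_inv_cancel]; rfl
  rw [apply_eq g (g⁻¹ x)] at this
  rw [add_assoc, add_comm (g.linear v), ← add_assoc, this, add_comm]

lemma normalizer_linear_latt {g : Aff n} (hg : g ∈ (Subgroup.normalizer (Γ : Set (Aff n)))) {v : V} (hv : v ∈ latt Γ) :
    g.linear v ∈ latt Γ := by
  rw [mem_latt_iff, ← conj_constVAdd]
  exact (Subgroup.mem_normalizer_iff.mp hg _).mp hv

noncomputable abbrev F : Subgroup GL := Γ.map (tau n)

noncomputable abbrev K : Subgroup GL := NAut n (transLattice n Γ) (F Γ)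

lemma tau_apply (g : Aff n) (v : V) : tau n g v = g.linear v := rfl

lemma mem_F_latt {A : GL} (hA : A ∈ F Γ) {v : V} (hv : v ∈ latt Γ) : A v ∈ latt Γ := by
  obtain ⟨γ, hγ, rfl⟩ := hA
  exact normalizer_linear_latt Γ (Subgroup.le_normalizer hγ) hv

lemma mem_K_iff {A : GL} : A ∈ K Γ ↔
    A ∈ MulAction.stabilizer GL (transLattice n Γ) ⊓ (Subgroup.normalizer (F Γ : Set GL)) := Iff.rfl

lemma mem_K_stab {A : GL} (hA : A ∈ K Γ) : A • transLattice n Γ = transLattice n Γ :=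
  MulAction.mem_stabilizer_iff.mp ((Subgroup.mem_inf.mp ((mem_K_iff Γ).mp hA)).1)

lemma mem_K_latt {A : GL} (hA : A ∈ K Γ) {v : V} (hv : v ∈ latt Γ) : A v ∈ latt Γ := by
  have h := mem_K_stab Γ hA
  have : A • v ∈ A • transLattice n Γ := Set.smul_mem_smul_set hv
  rw [h] at this
  have h2 : A v ∈ transLattice n Γ := by simpa [LinearEquiv.smul_def] using this
  exact h2

lemma mem_K_normalizer {A : GL} (hA : A ∈ K Γ) : A ∈ (Subgroup.normalizer (F Γ : Set GL)) :=
  (Subgroup.mem_inf.mp ((mem_K_iff Γ).mp hA)).2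

/-- The torus `ℝⁿ/Λ`. -/
abbrev T := V ⧸ latt Γ

def mkT : V →+ T Γ := QuotientAddGroup.mk' (latt Γ)

lemma mkT_surjective : Function.Surjective (mkT Γ) := QuotientAddGroup.mk'_surjective _

lemma mkT_eq_zero {v : V} (hv : v ∈ latt Γ) : mkT Γ v = 0 :=
  (QuotientAddGroup.eq_zero_iff v).mpr hv

/-- Map on the torus induced by a lattice-preserving linear equivalence. -/
def Tmap (A : GL) (hA : ∀ v ∈ latt Γ, A v ∈ latt Γ) : T Γ →+ T Γ :=
  QuotientAddGroup.map _ _ (AddMonoidHom.mk' (fun v => A v) (by intro a b; exact map_add A a b))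
    (fun v hv => hA v hv)

lemma Tmap_mk (A : GL) (hA) (v : V) : Tmap Γ A hA (mkT Γ v) = mkT Γ (A v) := rfl

def FmapT (f : ↥(F Γ)) : T Γ →+ T Γ := Tmap Γ f.1 (fun _ hv => mem_F_latt Γ f.2 hv)

def KmapT (A : ↥(K Γ)) : T Γ →+ T Γ := Tmap Γ A.1 (fun _ hv => mem_K_latt Γ A.2 hv)

/-- the "translation class" of an affine map. -/
def cc (g : Aff n) : T Γ := mkT Γ (g 0)

lemma cc_eq {γ γ' : Aff n} (hγ : γ ∈ Γ) (hγ' : γ' ∈ Γ) (h : tau n γ = tau n γ') :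
    cc Γ γ = cc Γ γ' := by
  have hd : γ' * γ⁻¹ ∈ Γ := Γ.mul_mem hγ' (Γ.inv_mem hγ)
  have hτ : tau n (γ' * γ⁻¹) = 1 := by
    rw [map_mul, map_inv, h, mul_inv_cancel]
  -- a map with trivial linear part is a translation
  have hlin : (γ' * γ⁻¹).linear = LinearEquiv.refl ℝ V := hτ
  have htrans : γ' * γ⁻¹ = AffineEquiv.constVAdd ℝ V ((γ' * γ⁻¹) 0) := by
    apply AffineEquiv.ext; intro x
    rw [constVAdd_apply, apply_eq (γ' * γ⁻¹) x, hlin, add_comm]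
    rfl
  have hmem : (γ' * γ⁻¹) 0 ∈ latt Γ := by
    rw [mem_latt_iff, ← htrans]; exact hd
  -- compute (γ' * γ⁻¹) 0 = γ' 0 - γ 0
  have hval : (γ' * γ⁻¹) 0 = γ' 0 - γ 0 := by
    have h0 : γ (γ⁻¹ 0) = 0 := by
      show (γ * γ⁻¹) 0 = 0
      rw [mul_inv_cancel]; rfl
    rw [apply_eq γ (γ⁻¹ 0)] at h0
    have h1 : γ.linear (γ⁻¹ 0) = -(γ 0) := by linear_combination (norm := module) h0
    show γ' (γ⁻¹ 0) = γ' 0 - γ 0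
    rw [apply_eq γ' (γ⁻¹ 0)]
    have h2 : γ'.linear (γ⁻¹ 0) = γ.linear (γ⁻¹ 0) := by
      show tau n γ' (γ⁻¹ 0) = tau n γ (γ⁻¹ 0)
      rw [h]
    rw [h2, h1]
    abel
  have : mkT Γ (γ' 0 - γ 0) = 0 := by rw [← hval]; exact mkT_eq_zero Γ hmem
  have := sub_eq_zero.mp (by rw [map_sub] at this; exact this)
  exact this.symm

lemma mem_Γ_of {γ : Aff n} (hγ : γ ∈ Γ) (g : Aff n) (h1 : tau n g = tau n γ)
    (h2 : cc Γ g = cc Γ γ) : g ∈ Γ := by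
  have hmem : g 0 - γ 0 ∈ latt Γ := by
    have : mkT Γ (g 0) - mkT Γ (γ 0) = 0 := by
      rw [sub_eq_zero]; exact h2
    rw [← map_sub] at this
    exact (QuotientAddGroup.eq_zero_iff _).mp this
  have : g = AffineEquiv.constVAdd ℝ V (g 0 - γ 0) * γ := by
    apply AffineEquiv.ext; intro x
    show g x = (g 0 - γ 0) + γ x
    rw [apply_eq g x, apply_eq γ x]
    have : g.linear x = γ.linear x := by
      show tau n g x = tau n γ x
      rw [h1]
    rw [this]
    abel
  rw [this]
  exact Γ.mul_mem hmem hγ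

/-- Part 1: τ of the affine normalizer lands in `NAut`. -/
lemma part1 : (Subgroup.normalizer (Γ : Set (Aff n))).map (tau n) ≤ K Γ := by
  rintro _ ⟨g, hg, rfl⟩
  rw [mem_K_iff, Subgroup.mem_inf]
  constructor
  · rw [MulAction.mem_stabilizer_iff]
    ext x
    constructor
    · rintro ⟨y, hy, rfl⟩
      have h2 : ((tau n) g) y ∈ transLattice n Γ := normalizer_linear_latt Γ hg hy
      simpa [LinearEquiv.smul_def] using h2
    · intro hx
      refine ⟨(tau n g)⁻¹ x, ?_, ?_⟩
      · have : (tau n g)⁻¹ x = (g⁻¹).linear x := by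
          rw [← map_inv]; rfl
        rw [this]
        exact normalizer_linear_latt Γ ((Subgroup.normalizer (Γ : Set (Aff n))).inv_mem hg) hx
      · show (tau n) g • ((tau n g)⁻¹ x) = x
        rw [LinearEquiv.smul_def]
        show (tau n g * (tau n g)⁻¹) x = x
        rw [mul_inv_cancel]
        rfl
  · rw [Subgroup.mem_normalizer_iff]
    intro B
    constructor
    · rintro ⟨γ, hγ, rfl⟩
      exact ⟨g * γ * g⁻¹, (Subgroup.mem_normalizer_iff.mp hg γ).mp hγ, by rw [map_mul, map_mul, map_inv]⟩
    · rintro ⟨γ', hγ', hB⟩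
      refine ⟨g⁻¹ * γ' * g, ?_, ?_⟩
      · have : g * (g⁻¹ * γ' * g) * g⁻¹ ∈ Γ := by
          group
          simpa using hγ'
        exact (Subgroup.mem_normalizer_iff.mp hg _).mpr this
      · rw [map_mul, map_mul, map_inv, hB]
        group

/-- A representative in Γ for each element of F. -/
noncomputable def rep (f : ↥(F Γ)) : Aff n := (Subgroup.mem_map.mp f.2).choose

lemma rep_mem (f : ↥(F Γ)) : rep Γ f ∈ Γ := (Subgroup.mem_map.mp f.2).choose_spec.1

lemma tau_rep (f : ↥(F Γ)) : tau n (rep Γ f) = f.1 := (Subgroup.mem_map.mp f.2).choose_spec.2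

/-- The canonical cocycle of Γ. -/
noncomputable def α (f : ↥(F Γ)) : T Γ := cc Γ (rep Γ f)

lemma α_eq (f : ↥(F Γ)) {γ : Aff n} (hγ : γ ∈ Γ) (h : tau n γ = f.1) : α Γ f = cc Γ γ :=
  cc_eq Γ (rep_mem Γ f) hγ ((tau_rep Γ f).trans h.symm)

def IsCocycle (s : ↥(F Γ) → T Γ) : Prop :=
  ∀ f g : ↥(F Γ), s (f * g) = FmapT Γ f (s g) + s f

def δ (t : T Γ) : ↥(F Γ) → T Γ := fun f => FmapT Γ f t - t

def Rel (s s' : ↥(F Γ) → T Γ) : Prop := ∃ t : T Γ, ∀ f, s' f = s f + δ Γ t f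

lemma cc_mul (g h : Aff n) : cc Γ (g * h) = mkT Γ (g.linear (h 0)) + cc Γ g := by
  show mkT Γ ((g * h) 0) = _
  have : (g * h) 0 = g.linear (h 0) + g 0 := apply_eq g (h 0)
  rw [this, map_add]
  rfl

lemma α_cocycle : IsCocycle Γ (α Γ) := by
  intro f g
  have h1 : rep Γ f * rep Γ g ∈ Γ := Γ.mul_mem (rep_mem Γ f) (rep_mem Γ g)
  have h2 : tau n (rep Γ f * rep Γ g) = (f * g).1 := by
    rw [map_mul, tau_rep, tau_rep]; rfl
  rw [α_eq Γ (f * g) h1 h2, cc_mul]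
  congr 1
  · show mkT Γ ((rep Γ f).linear ((rep Γ g) 0)) = FmapT Γ f (α Γ g)
    have : (rep Γ f).linear ((rep Γ g) 0) = f.1 ((rep Γ g) 0) := by
      rw [← tau_apply, tau_rep]
    rw [this]
    rfl

noncomputable def conjF (A : ↥(K Γ)) (f : ↥(F Γ)) : ↥(F Γ) :=
  ⟨A.1⁻¹ * f.1 * A.1, by
    have h := (Subgroup.mem_normalizer_iff.mp
      ((Subgroup.normalizer (F Γ : Set GL)).inv_mem (mem_K_normalizer Γ A.2)) f.1).mp f.2
    rwa [inv_inv] at h⟩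

lemma conjF_coe (A : ↥(K Γ)) (f : ↥(F Γ)) : (conjF Γ A f).1 = A.1⁻¹ * f.1 * A.1 := rfl

lemma conjF_one (f : ↥(F Γ)) : conjF Γ 1 f = f := by
  apply Subtype.ext
  show (1 : GL)⁻¹ * f.1 * 1 = f.1
  group

lemma conjF_mul (A B : ↥(K Γ)) (f : ↥(F Γ)) :
    conjF Γ (A * B) f = conjF Γ B (conjF Γ A f) := by
  apply Subtype.ext
  show (A.1 * B.1)⁻¹ * f.1 * (A.1 * B.1) = B.1⁻¹ * (A.1⁻¹ * f.1 * A.1) * B.1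
  group

lemma conjF_inv_cancel (A : ↥(K Γ)) (f : ↥(F Γ)) : conjF Γ A (conjF Γ A⁻¹ f) = f := by
  rw [← conjF_mul, inv_mul_cancel, conjF_one]

lemma conjF_cancel_inv (A : ↥(K Γ)) (f : ↥(F Γ)) : conjF Γ A⁻¹ (conjF Γ A f) = f := by
  rw [← conjF_mul, mul_inv_cancel, conjF_one]

noncomputable def act (A : ↥(K Γ)) (s : ↥(F Γ) → T Γ) : ↥(F Γ) → T Γ :=
  fun f => KmapT Γ A (s (conjF Γ A f))

lemma KmapT_mk (A : ↥(K Γ)) (v : V) : KmapT Γ A (mkT Γ v) = mkT Γ (A.1 v) := rfl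

lemma FmapT_mk (f : ↥(F Γ)) (v : V) : FmapT Γ f (mkT Γ v) = mkT Γ (f.1 v) := rfl

lemma KmapT_one (x : T Γ) : KmapT Γ 1 x = x := by
  obtain ⟨v, rfl⟩ := mkT_surjective Γ x
  rfl

lemma KmapT_mul (A B : ↥(K Γ)) (x : T Γ) :
    KmapT Γ (A * B) x = KmapT Γ A (KmapT Γ B x) := by
  obtain ⟨v, rfl⟩ := mkT_surjective Γ x
  rfl

lemma KmapT_Fmap_comm (A : ↥(K Γ)) (f : ↥(F Γ)) (x : T Γ) :
    KmapT Γ A (FmapT Γ (conjF Γ A f) x) = FmapT Γ f (KmapT Γ A x) := by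
  obtain ⟨v, rfl⟩ := mkT_surjective Γ x
  rw [FmapT_mk, KmapT_mk, KmapT_mk, FmapT_mk]
  congr 1
  show A.1 ((A.1⁻¹ * f.1 * A.1) v) = f.1 (A.1 v)
  have h1 : (A.1⁻¹ * f.1 * A.1) v = A.1⁻¹ (f.1 (A.1 v)) := rfl
  rw [h1]
  show (A.1 * A.1⁻¹) (f.1 (A.1 v)) = f.1 (A.1 v)
  rw [mul_inv_cancel]
  rfl

lemma act_one (s : ↥(F Γ) → T Γ) : act Γ 1 s = s := by
  funext f
  show KmapT Γ 1 (s (conjF Γ 1 f)) = s f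
  rw [conjF_one, KmapT_one]

lemma act_mul (A B : ↥(K Γ)) (s : ↥(F Γ) → T Γ) :
    act Γ (A * B) s = act Γ A (act Γ B s) := by
  funext f
  show KmapT Γ (A * B) (s (conjF Γ (A * B) f)) = KmapT Γ A (KmapT Γ B (s (conjF Γ B (conjF Γ A f))))
  rw [conjF_mul, KmapT_mul]

lemma act_cocycle (A : ↥(K Γ)) {s : ↥(F Γ) → T Γ} (hs : IsCocycle Γ s) :
    IsCocycle Γ (act Γ A s) := by
  intro f g
  show KmapT Γ A (s (conjF Γ A (f * g)))
      = FmapT Γ f (KmapT Γ A (s (conjF Γ A g))) + KmapT Γ A (s (conjF Γ A f))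
  have hconj : conjF Γ A (f * g) = conjF Γ A f * conjF Γ A g := by
    apply Subtype.ext
    show A.1⁻¹ * (f.1 * g.1) * A.1 = (A.1⁻¹ * f.1 * A.1) * (A.1⁻¹ * g.1 * A.1)
    group
  rw [hconj, hs, map_add, KmapT_Fmap_comm]

lemma KmapT_δ (A : ↥(K Γ)) (t : T Γ) (f : ↥(F Γ)) :
    KmapT Γ A (δ Γ t (conjF Γ A f)) = δ Γ (KmapT Γ A t) f := by
  show KmapT Γ A (FmapT Γ (conjF Γ A f) t - t) = FmapT Γ f (KmapT Γ A t) - KmapT Γ A t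
  rw [map_sub, KmapT_Fmap_comm]

lemma rel_refl (s : ↥(F Γ) → T Γ) : Rel Γ s s :=
  ⟨0, fun f => by simp [δ]⟩

lemma rel_symm {s s' : ↥(F Γ) → T Γ} (h : Rel Γ s s') : Rel Γ s' s := by
  obtain ⟨t, ht⟩ := h
  exact ⟨-t, fun f => by rw [ht f]; simp [δ]; abel⟩

lemma rel_trans {s s' s'' : ↥(F Γ) → T Γ} (h : Rel Γ s s') (h' : Rel Γ s' s'') :
    Rel Γ s s'' := by
  obtain ⟨t, ht⟩ := h
  obtain ⟨t', ht'⟩ := h'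
  exact ⟨t + t', fun f => by rw [ht' f, ht f]; simp [δ]; abel⟩

lemma act_rel (A : ↥(K Γ)) {s s' : ↥(F Γ) → T Γ} (h : Rel Γ s s') :
    Rel Γ (act Γ A s) (act Γ A s') := by
  obtain ⟨t, ht⟩ := h
  refine ⟨KmapT Γ A t, fun f => ?_⟩
  show KmapT Γ A (s' (conjF Γ A f)) = KmapT Γ A (s (conjF Γ A f)) + δ Γ (KmapT Γ A t) f
  rw [ht, map_add, KmapT_δ]
lemma δ_neg (t : T Γ) (f : ↥(F Γ)) : δ Γ (-t) f = -(δ Γ t f) := by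
  simp [δ]; abel

lemma conj_zero (g γ : Aff n) :
    (g * γ * g⁻¹).linear (g 0) + (g * γ * g⁻¹) 0 = g.linear (γ 0) + g 0 := by
  have e1 : (g * γ * g⁻¹) (g 0) = g (γ 0) := by
    have h0 : g⁻¹ (g 0) = 0 := by
      show (g⁻¹ * g) 0 = 0
      rw [inv_mul_cancel]; rfl
    show g (γ (g⁻¹ (g 0))) = g (γ 0)
    rw [h0]
  rw [apply_eq (g * γ * g⁻¹) (g 0), apply_eq g (γ 0)] at e1
  exact e1

/-- key conjugation formula on the torus. -/
lemma cc_conj (g γ : Aff n) :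
    cc Γ (g * γ * g⁻¹)
      = mkT Γ (g.linear (γ 0)) + mkT Γ (g 0) - mkT Γ ((tau n (g * γ * g⁻¹)) (g 0)) := by
  have := congrArg (mkT Γ) (conj_zero g γ)
  rw [map_add, map_add] at this
  have h : mkT Γ ((g * γ * g⁻¹).linear (g 0)) = mkT Γ ((tau n (g * γ * g⁻¹)) (g 0)) := rfl
  rw [h] at this
  show mkT Γ ((g * γ * g⁻¹) 0) = _
  rw [← this]
  abel

/-- If `A = τ g` for `g` in the affine normalizer, then `A` acts on `α` by a coboundary. -/
lemma L2 (A : ↥(K Γ)) (g : Aff n) (hg : g ∈ (Subgroup.normalizer (Γ : Set (Aff n)))) (hAg : A.1 = tau n g) :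
    ∀ f, act Γ A (α Γ) f = α Γ f + δ Γ (mkT Γ (g 0)) f := by
  intro f
  set h := conjF Γ A f with hh
  set γ := rep Γ h with hγdef
  have hγ : γ ∈ Γ := rep_mem Γ h
  have hτγ : tau n γ = h.1 := tau_rep Γ h
  have hconjmem : g * γ * g⁻¹ ∈ Γ := (Subgroup.mem_normalizer_iff.mp hg γ).mp hγ
  have hτconj : tau n (g * γ * g⁻¹) = f.1 := by
    rw [map_mul, map_mul, map_inv, hτγ, conjF_coe, ← hAg]
    group
  have hαf : α Γ f = cc Γ (g * γ * g⁻¹) := α_eq Γ f hconjmem hτconj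
  have hcc := cc_conj Γ g γ
  rw [hτconj] at hcc
  -- act Γ A (α Γ) f = mkT Γ (g.linear (γ 0))
  have hact : act Γ A (α Γ) f = mkT Γ (g.linear (γ 0)) := by
    show KmapT Γ A (α Γ (conjF Γ A f)) = _
    rw [← hh, α_eq Γ h hγ hτγ]
    show KmapT Γ A (mkT Γ (γ 0)) = _
    rw [KmapT_mk, hAg]
    rfl
  rw [hαf, hcc, hact, δ, FmapT_mk]
  abel

noncomputable def mkAff (A : ↥(K Γ)) (b : V) : Aff n :=
  AffineEquiv.constVAdd ℝ V b * LinearEquiv.toAffineEquiv A.1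

lemma tau_constVAdd (v : V) : tau n (AffineEquiv.constVAdd ℝ V v) = 1 := by
  apply LinearEquiv.ext; intro x; rfl

lemma tau_mkAff (A : ↥(K Γ)) (b : V) : tau n (mkAff Γ A b) = A.1 := by
  show tau n (_ * _) = A.1
  rw [map_mul, tau_constVAdd]
  show 1 * A.1 = A.1
  rw [one_mul]

lemma mkAff_apply (A : ↥(K Γ)) (b x : V) : mkAff Γ A b x = b + A.1 x := rfl

lemma mkAff_zero (A : ↥(K Γ)) (b : V) : mkAff Γ A b 0 = b := by
  rw [mkAff_apply, map_zero, add_zero]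

lemma mkAff_linear (A : ↥(K Γ)) (b : V) (x : V) : (mkAff Γ A b).linear x = A.1 x := by
  show tau n (mkAff Γ A b) x = A.1 x
  rw [tau_mkAff]

/-- Main construction: an element of `K` whose action on `α` is trivial up to the coboundary of
`b` conjugates `Γ` (partially) into itself via the affine map `mkAff A b`. -/
lemma claimC (A : ↥(K Γ)) (b : V)
    (hrel : ∀ f, act Γ A (α Γ) f = α Γ f + δ Γ (mkT Γ b) f)
    {γ : Aff n} (hγ : γ ∈ Γ) : mkAff Γ A b * γ * (mkAff Γ A b)⁻¹ ∈ Γ := by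
  set g := mkAff Γ A b with hgdef
  have hf : tau n γ ∈ F Γ := ⟨γ, hγ, rfl⟩
  set f : ↥(F Γ) := ⟨tau n γ, hf⟩ with hfdef
  set f' : ↥(F Γ) := conjF Γ A⁻¹ f with hf'def
  have hf'coe : f'.1 = A.1 * f.1 * A.1⁻¹ := by
    show (A⁻¹).1⁻¹ * f.1 * (A⁻¹).1 = A.1 * f.1 * A.1⁻¹
    simp
  have hback : conjF Γ A f' = f := conjF_inv_cancel Γ A f
  have hτconj : tau n (g * γ * g⁻¹) = f'.1 := by
    rw [map_mul, map_mul, map_inv, tau_mkAff, hf'coe]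
  refine mem_Γ_of Γ (rep_mem Γ f') _ ?_ ?_
  · rw [hτconj, tau_rep]
  · -- cc (g γ g⁻¹) = cc (rep f') = α f'
    have hcc := cc_conj Γ g γ
    rw [hτconj] at hcc
    have hlin : mkT Γ (g.linear (γ 0)) = KmapT Γ A (α Γ f) := by
      rw [α_eq Γ f hγ rfl]
      show mkT Γ (g.linear (γ 0)) = mkT Γ (A.1 (γ 0))
      rw [mkAff_linear]
    have hact : KmapT Γ A (α Γ f) = α Γ f' + δ Γ (mkT Γ b) f' := by
      have := hrel f'
      rw [act] at this
      rw [hback] at this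
      exact this
    have hg0 : g 0 = b := mkAff_zero Γ A b
    rw [hcc, hg0, hlin, hact, α_eq Γ f' (rep_mem Γ f') (tau_rep Γ f'), δ, FmapT_mk]
    abel

lemma mkAff_inv (A : ↥(K Γ)) (b : V) :
    (mkAff Γ A b)⁻¹ = mkAff Γ A⁻¹ (-(A.1⁻¹ b)) := by
  symm
  apply eq_inv_of_mul_eq_one_left
  apply AffineEquiv.ext; intro x
  show mkAff Γ A⁻¹ (-(A.1⁻¹ b)) (mkAff Γ A b x) = x
  rw [mkAff_apply, mkAff_apply]
  show -(A.1⁻¹ b) + (A⁻¹).1 (b + A.1 x) = x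
  have h1 : (A⁻¹).1 = A.1⁻¹ := rfl
  rw [h1, map_add]
  have h2 : A.1⁻¹ (A.1 x) = x := by
    show (A.1⁻¹ * A.1) x = x
    rw [inv_mul_cancel]; rfl
  rw [h2]
  abel

/-- Converse: if the class of `α` is fixed by `A`, then `A` lifts to the affine normalizer. -/
lemma L1 (A : ↥(K Γ)) (hrel : Rel Γ (α Γ) (act Γ A (α Γ))) :
    A.1 ∈ (Subgroup.normalizer (Γ : Set (Aff n))).map (tau n) := by
  obtain ⟨t, ht⟩ := hrel
  obtain ⟨b, rfl⟩ := mkT_surjective Γ t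
  -- relation for A⁻¹
  have hrelinv : ∀ f, act Γ A⁻¹ (α Γ) f = α Γ f + δ Γ (mkT Γ (-(A.1⁻¹ b))) f := by
    intro f
    have h1 := ht (conjF Γ A⁻¹ f)
    rw [act, conjF_inv_cancel] at h1
    have h2 := congrArg (KmapT Γ A⁻¹) h1
    rw [map_add, KmapT_δ, ← KmapT_mul, inv_mul_cancel, KmapT_one] at h2
    have h3 : KmapT Γ A⁻¹ (α Γ (conjF Γ A⁻¹ f)) = act Γ A⁻¹ (α Γ) f := rfl
    rw [h3] at h2
    have h4 : KmapT Γ A⁻¹ (mkT Γ b) = mkT Γ (A.1⁻¹ b) := rfl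
    rw [h4] at h2
    rw [show mkT Γ (-(A.1⁻¹ b)) = -(mkT Γ (A.1⁻¹ b)) from map_neg _ _, δ_neg]
    rw [h2]
    abel
  refine ⟨mkAff Γ A b, ?_, tau_mkAff Γ A b⟩
  show mkAff Γ A b ∈ (Subgroup.normalizer (Γ : Set (Aff n)))
  rw [Subgroup.mem_normalizer_iff]
  intro x
  constructor
  · intro hx
    exact claimC Γ A b ht hx
  · intro hx
    have h5 := claimC Γ A⁻¹ (-(A.1⁻¹ b)) hrelinv hx
    rw [← mkAff_inv] at h5
    have h6 : (mkAff Γ A b)⁻¹ * (mkAff Γ A b * x * (mkAff Γ A b)⁻¹) * ((mkAff Γ A b)⁻¹)⁻¹ = x := by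
      group
    rwa [h6] at h5
lemma latt_fg (hdisc : DiscreteTopology ↥(transLattice n Γ)) : AddGroup.FG ↥(latt Γ) := by
  letI : DiscreteTopology ↥(AddSubgroup.toIntSubmodule (latt Γ)) := hdisc
  haveI : Module.Finite ℤ ↥(AddSubgroup.toIntSubmodule (latt Γ)) := inferInstance
  have h := Module.Finite.iff_addGroup_fg.mp ‹Module.Finite ℤ ↥(AddSubgroup.toIntSubmodule (latt Γ))›
  exact h

lemma nsmul_neg' {G : Type*} [AddCommGroup G] (m : ℕ) (a : G) : m • (-a) = -(m • a) := by
  induction m with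
  | zero => simp
  | succ k ih => rw [succ_nsmul, succ_nsmul, ih]; abel

/-- The `m`-torsion subgroup of the torus. -/
def Tors (m : ℕ) : AddSubgroup (T Γ) where
  carrier := {x | m • x = 0}
  zero_mem' := smul_zero m
  add_mem' := by
    intro a b ha hb
    show m • (a + b) = 0
    rw [nsmul_add, ha, hb, add_zero]
  neg_mem' := by
    intro a ha
    show m • (-a) = 0
    rw [nsmul_neg', ha, neg_zero]

lemma tors_finite (m : ℕ) (hm : m ≠ 0) (hdisc : DiscreteTopology ↥(transLattice n Γ)) :
    Finite ↥(Tors Γ m) := by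
  have hmR : ((m : ℝ)) ≠ 0 := Nat.cast_ne_zero.mpr hm
  -- a surjection from the lattice onto the torsion subgroup
  have htor : ∀ v : ↥(latt Γ), mkT Γ ((m : ℝ)⁻¹ • v.1) ∈ Tors Γ m := by
    intro v
    show m • mkT Γ ((m : ℝ)⁻¹ • v.1) = 0
    rw [← map_nsmul, ← Nat.cast_smul_eq_nsmul ℝ, smul_smul, mul_inv_cancel₀ hmR, one_smul]
    exact mkT_eq_zero Γ v.2
  let φ : ↥(latt Γ) →+ ↥(Tors Γ m) :=
    { toFun := fun v => ⟨mkT Γ ((m : ℝ)⁻¹ • v.1), htor v⟩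
      map_zero' := by
        apply Subtype.ext
        show mkT Γ ((m : ℝ)⁻¹ • (0 : V)) = 0
        rw [smul_zero, map_zero]
      map_add' := by
        intro a b
        apply Subtype.ext
        show mkT Γ ((m : ℝ)⁻¹ • (a.1 + b.1)) = mkT Γ ((m : ℝ)⁻¹ • a.1) + mkT Γ ((m : ℝ)⁻¹ • b.1)
        rw [smul_add, map_add] }
  have hφ : Function.Surjective φ := by
    rintro ⟨x, hx⟩
    obtain ⟨u, rfl⟩ := mkT_surjective Γ x
    have hmem : (m : ℝ) • u ∈ latt Γ := by
      have : m • mkT Γ u = 0 := hx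
      rw [← map_nsmul, ← Nat.cast_smul_eq_nsmul ℝ] at this
      exact (QuotientAddGroup.eq_zero_iff _).mp this
    refine ⟨⟨(m : ℝ) • u, hmem⟩, ?_⟩
    apply Subtype.ext
    show mkT Γ ((m : ℝ)⁻¹ • ((m : ℝ) • u)) = mkT Γ u
    rw [smul_smul, inv_mul_cancel₀ hmR, one_smul]
  haveI : AddGroup.FG ↥(latt Γ) := latt_fg Γ hdisc
  haveI : AddGroup.FG ↥(Tors Γ m) := AddGroup.fg_of_surjective (f := φ) hφ
  apply AddCommGroup.finite_of_fg_torsion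
  intro x
  rw [isOfFinAddOrder_iff_nsmul_eq_zero]
  refine ⟨m, Nat.pos_of_ne_zero hm, ?_⟩
  apply Subtype.ext
  show m • x.1 = 0
  exact x.2

lemma FmapT_mul (f g : ↥(F Γ)) (x : T Γ) :
    FmapT Γ (f * g) x = FmapT Γ f (FmapT Γ g x) := by
  obtain ⟨v, rfl⟩ := mkT_surjective Γ x
  rfl

/-- Every cocycle is cohomologous to a torsion-valued one. -/
lemma exists_torsion_rep (hfin : Finite ↥(F Γ)) {s : ↥(F Γ) → T Γ} (hs : IsCocycle Γ s) :
    ∃ s', IsCocycle Γ s' ∧ (∀ f, Nat.card ↥(F Γ) • s' f = 0) ∧ Rel Γ s s' := by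
  letI := Fintype.ofFinite ↥(F Γ)
  set m := Nat.card ↥(F Γ) with hm
  have hmpos : m ≠ 0 := Nat.card_ne_zero.mpr ⟨⟨⟨1, (F Γ).one_mem⟩⟩, hfin⟩
  have hmR : ((m : ℝ)) ≠ 0 := Nat.cast_ne_zero.mpr hmpos
  set σ := ∑ g : ↥(F Γ), s g with hσ
  have hkey : ∀ f, m • s f = σ - FmapT Γ f σ := by
    intro f
    have h1 : ∑ g : ↥(F Γ), s (f * g) = σ := by
      rw [hσ]
      exact Fintype.sum_equiv (Equiv.mulLeft f) _ _ (fun g => rfl)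
    have h2 : ∑ g : ↥(F Γ), s (f * g) = FmapT Γ f σ + m • s f := by
      calc ∑ g : ↥(F Γ), s (f * g) = ∑ g : ↥(F Γ), (FmapT Γ f (s g) + s f) := by
            apply Finset.sum_congr rfl
            intro g _
            exact hs f g
        _ = (∑ g : ↥(F Γ), FmapT Γ f (s g)) + (∑ _g : ↥(F Γ), s f) := Finset.sum_add_distrib
        _ = FmapT Γ f σ + m • s f := by
            rw [← map_sum, Finset.sum_const, Finset.card_univ, hσ, hm, Nat.card_eq_fintype_card]
    rw [h1] at h2
    exact eq_sub_iff_add_eq.mpr (by rw [add_comm]; exact h2.symm)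
  obtain ⟨w, hw⟩ := mkT_surjective Γ σ
  set u := mkT Γ ((m : ℝ)⁻¹ • w) with hu
  have hmu : m • u = σ := by
    rw [hu, ← map_nsmul, ← Nat.cast_smul_eq_nsmul ℝ, smul_smul, mul_inv_cancel₀ hmR, one_smul, hw]
  refine ⟨fun f => s f + δ Γ u f, ?_, ?_, ⟨u, fun f => rfl⟩⟩
  · intro f g
    show s (f * g) + δ Γ u (f * g) = FmapT Γ f (s g + δ Γ u g) + (s f + δ Γ u f)
    rw [hs f g]
    show FmapT Γ f (s g) + s f + (FmapT Γ (f * g) u - u)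
        = FmapT Γ f (s g + (FmapT Γ g u - u)) + (s f + (FmapT Γ f u - u))
    rw [FmapT_mul, map_add, map_sub]
    abel
  · intro f
    show m • (s f + δ Γ u f) = 0
    rw [nsmul_add, hkey f]
    show σ - FmapT Γ f σ + m • (FmapT Γ f u - u) = 0
    rw [nsmul_sub, ← map_nsmul, hmu]
    abel
noncomputable def relSetoid : Setoid (↥(F Γ) → T Γ) :=
  ⟨Rel Γ, ⟨rel_refl Γ, rel_symm Γ, rel_trans Γ⟩⟩

/-- `H¹(F, ℝⁿ/Λ)`-style quotient (of all functions, not just cocycles). -/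
def H1 := Quotient (relSetoid Γ)

/-- The set of cohomology classes of cocycles is finite. -/
lemma SC_finite (hdisc : DiscreteTopology ↥(transLattice n Γ)) (hfin : Finite ↥(F Γ)) :
    Finite {x : H1 Γ // ∃ s, IsCocycle Γ s ∧ Quotient.mk (relSetoid Γ) s = x} := by
  set m := Nat.card ↥(F Γ) with hm
  have hmpos : m ≠ 0 := Nat.card_ne_zero.mpr ⟨⟨⟨1, (F Γ).one_mem⟩⟩, hfin⟩
  haveI : Finite ↥(Tors Γ m) := tors_finite Γ m hmpos hdisc
  haveI : Finite (↥(F Γ) → ↥(Tors Γ m)) := Pi.finite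
  have hrep : ∀ x : {x : H1 Γ // ∃ s, IsCocycle Γ s ∧ Quotient.mk (relSetoid Γ) s = x},
      ∃ e : ↥(F Γ) → ↥(Tors Γ m), Quotient.mk (relSetoid Γ) (fun f => (e f).1) = x.1 := by
    rintro ⟨x, s, hs, rfl⟩
    obtain ⟨s', hs', htors, hrel⟩ := exists_torsion_rep Γ hfin hs
    refine ⟨fun f => ⟨s' f, htors f⟩, ?_⟩
    exact Quotient.sound (rel_symm Γ hrel)
  refine Finite.of_injective (fun x => (hrep x).choose) ?_
  intro x y hxy
  replace hxy : (hrep x).choose = (hrep y).choose := hxy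
  apply Subtype.ext
  rw [← (hrep x).choose_spec, ← (hrep y).choose_spec, hxy]

end Stmt10Aux

open Stmt10Aux in
/-- Let `Γ ≤ Aff(n)` have full translation lattice `Λ = Λ_Γ` and finite
holonomy `F = F_Γ`.  Then `τ(N_{Aff(n)}(Γ))` is a finite-index subgroup of
`N_{Aut(Λ)}(F) = {A ∈ GL(n,ℝ) | A(Λ) = Λ, A F A⁻¹ = F}`. -/
theorem stmt10 (n : ℕ) (Γ : Subgroup (Aff n))
    (hdisc : DiscreteTopology ↥(transLattice n Γ))
    (hspan : Submodule.span ℝ (transLattice n Γ) = ⊤)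
    (hfin : Finite ↥(Γ.map (tau n))) :
    (Subgroup.normalizer (Γ : Set (Aff n))).map (tau n) ≤ NAut n (transLattice n Γ) (Γ.map (tau n)) ∧
    ((Subgroup.normalizer (Γ : Set (Aff n))).map (tau n)).relIndex (NAut n (transLattice n Γ) (Γ.map (tau n))) ≠ 0 := by
  refine ⟨part1 Γ, ?_⟩
  show (((Subgroup.normalizer (Γ : Set (Aff n))).map (tau n)).subgroupOf (K Γ)).index ≠ 0
  set H' := ((Subgroup.normalizer (Γ : Set (Aff n))).map (tau n)).subgroupOf (K Γ) with hH'
  -- the map to cohomology classes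
  have hα := α_cocycle Γ
  let φ : ↥(K Γ) → {x : H1 Γ // ∃ s, IsCocycle Γ s ∧ Quotient.mk (relSetoid Γ) s = x} :=
    fun A => ⟨Quotient.mk (relSetoid Γ) (act Γ A (α Γ)),
      act Γ A (α Γ), act_cocycle Γ A hα, rfl⟩
  have hwd : ∀ a b : ↥(K Γ), (QuotientGroup.leftRel H') a b → φ a = φ b := by
    intro a b hab
    rw [QuotientGroup.leftRel_apply] at hab
    rw [hH', Subgroup.mem_subgroupOf] at hab
    obtain ⟨g, hg, hτ⟩ := hab
    have hrel : Rel Γ (α Γ) (act Γ (a⁻¹ * b) (α Γ)) :=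
      ⟨mkT Γ (g 0), L2 Γ (a⁻¹ * b) g hg hτ.symm⟩
    have h2 : Rel Γ (act Γ a (α Γ)) (act Γ a (act Γ (a⁻¹ * b) (α Γ))) := act_rel Γ a hrel
    rw [← act_mul, mul_inv_cancel_left] at h2
    exact Subtype.ext (Quotient.sound h2)
  let Ψ : (↥(K Γ) ⧸ H') → {x : H1 Γ // ∃ s, IsCocycle Γ s ∧ Quotient.mk (relSetoid Γ) s = x} :=
    Quotient.lift φ hwd
  have hΨ : Function.Injective Ψ := by
    intro x y h
    obtain ⟨a, rfl⟩ := QuotientGroup.mk_surjective x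
    obtain ⟨b, rfl⟩ := QuotientGroup.mk_surjective y
    have h2 : Rel Γ (act Γ a (α Γ)) (act Γ b (α Γ)) := Quotient.exact (congrArg Subtype.val h)
    have h3 : Rel Γ (act Γ a⁻¹ (act Γ a (α Γ))) (act Γ a⁻¹ (act Γ b (α Γ))) := act_rel Γ a⁻¹ h2
    rw [← act_mul, ← act_mul, inv_mul_cancel, act_one] at h3
    have h4 := L1 Γ (a⁻¹ * b) h3
    apply Quotient.sound
    exact QuotientGroup.leftRel_apply.mpr (Subgroup.mem_subgroupOf.mpr h4)
  haveI := SC_finite Γ hdisc hfin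
  haveI : Finite (↥(K Γ) ⧸ H') := Finite.of_injective Ψ hΨ
  exact Subgroup.index_ne_zero_of_finite
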